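/- Let G be a group, H a finite-index subgroup of G, and S a subgroup of H. If S is separable in H, then S is separable in G. -/

import Mathlib

/-- A subgroup `S` of a group `G` is separable if for every `g ∈ G` with `g ∉ S` there
is a homomorphism `φ` from `G` to a finite group with `φ g ∉ φ(S)`. -/
def IsSeparableSubgroup {G : Type} [Group G] (S : Subgroup G) : Prop :=
  ∀ g : G, g ∉ S → ∃ (Q : Type) (_ : Group Q) (_ : Finite Q) (φ : G →* Q),
    φ g ∉ S.map φ

/-- If `H` is a finite-index subgroup of `G` and `S ≤ H` is separable as a subgroup
of `H`, then `S` is separable as a subgroup of `G`. -/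
theorem separable_of_separable_in_finiteIndex
    {G : Type} [Group G] (H : Subgroup G) (hH : H.FiniteIndex)
    (S : Subgroup G) (hSH : S ≤ H)
    (hsep : IsSeparableSubgroup (S.subgroupOf H)) :
    IsSeparableSubgroup S := by
  intro g hg
  by_cases hgH : g ∈ H
  · -- g ∈ H, use separability in H
    obtain ⟨Q, _, _, φ, hφ⟩ := hsep ⟨g, hgH⟩ (by
      simpa [Subgroup.mem_subgroupOf] using hg)
    -- K = kernel of φ pushed to G
    set K : Subgroup G := φ.ker.map H.subtype with hK
    have hKH : K ≤ H := by
      rintro x ⟨y, -, rfl⟩; exact y.2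
    have hKfin : K.FiniteIndex := by
      have h1 : φ.ker.FiniteIndex := Subgroup.finiteIndex_ker φ
      have h2 : (K.subgroupOf H) = φ.ker := by
        rw [hK, Subgroup.subgroupOf, Subgroup.comap_map_eq_self_of_injective
          H.subtype_injective]
      constructor
      have := Subgroup.relIndex_mul_index hKH
      have hrel : K.relIndex H = φ.ker.index := by
        rw [Subgroup.relIndex, h2]
      intro h0
      rw [← this, hrel] at h0
      rcases Nat.mul_eq_zero.mp h0 with h | h
      · exact h1.index_ne_zero h
      · exact hH.index_ne_zero h
    haveI := hKfin
    refine ⟨G ⧸ K.normalCore, inferInstance, inferInstance, QuotientGroup.mk' _, ?_⟩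
    rintro ⟨s, hs, heq⟩
    have hmem : s⁻¹ * g ∈ K.normalCore := by
      rwa [QuotientGroup.mk'_apply, QuotientGroup.mk'_apply, QuotientGroup.eq] at heq
    have hmemK : s⁻¹ * g ∈ K := K.normalCore_le hmem
    obtain ⟨y, hy, hy2⟩ := hmemK
    -- y : H with y.1 = s⁻¹ * g, y ∈ ker φ
    apply hφ
    have hsH : s ∈ H := hSH hs
    have : φ ⟨g, hgH⟩ = φ ⟨s, hsH⟩ := by
      have : (⟨g, hgH⟩ : H) = ⟨s, hsH⟩ * y := by
        ext
        have : (↑y : G) = s⁻¹ * g := hy2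
        simp [this]
      rw [this, map_mul, hy, mul_one]
    rw [this]
    exact ⟨⟨s, hsH⟩, by simpa [Subgroup.mem_subgroupOf] using hs, rfl⟩
  · -- g ∉ H, separate from H using normal core of H
    haveI := hH
    refine ⟨G ⧸ H.normalCore, inferInstance, inferInstance, QuotientGroup.mk' _, ?_⟩
    rintro ⟨s, hs, heq⟩
    have hmem : s⁻¹ * g ∈ H.normalCore := by
      rwa [QuotientGroup.mk'_apply, QuotientGroup.mk'_apply, QuotientGroup.eq] at heq
    have : g ∈ H := by
      have := H.normalCore_le hmem
      have := H.mul_mem (hSH hs) this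
      simpa using this
    exact hgH this
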